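/- arXiv:1209.2082 — 2 statements merged into one kernel-verified Lean document; each statement's English description precedes it below -/
import Mathlib

section
/- For every finitely supported I : ℤ×ℤ → ℝ, every kernel K in the simplex S, and every finitely supported X : ℤ×ℤ → ℝ, one has ‖(I⊗K)⊗X‖_F ≤ ‖I⊗X‖_F. -/
/-- Images, kernels, and filters: finitely supported functions `ℤ × ℤ → ℝ`. -/
abbrev Img := (ℤ × ℤ) →₀ ℝ

/-- Discrete 2D convolution: `(X ⊗ Y)(i,j) = ∑_{(u,v)} X((i,j)-(u,v)) * Y(u,v)`. -/
noncomputable def conv (X Y : Img) : Img :=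
  X.sum fun a xa => Y.sum fun b yb => Finsupp.single (a + b) (xa * yb)

/-- Frobenius norm `‖X‖_F = √(∑ X(i,j)²)`. -/
noncomputable def frob (X : Img) : ℝ := Real.sqrt (X.sum fun _ c => c ^ 2)

/-- Inner product `⟨X, Y⟩ = ∑ X(i,j) * Y(i,j)`. -/
noncomputable def inner2 (X Y : Img) : ℝ := X.sum fun p c => c * Y p

/-- ℓ¹ norm `‖X‖₁ = ∑ |X(i,j)|`. -/
noncomputable def l1 (X : Img) : ℝ := X.sum fun _ c => |c|

/-- The simplex `S` of blur kernels: nonnegative entries summing to one. -/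
def InSimplex (K : Img) : Prop := (∀ p, 0 ≤ K p) ∧ (K.sum fun _ c => c) = 1

/-- `X` is supported in the `a × b` grid `{0,…,a-1} × {0,…,b-1}`. -/
def SuppIn (a b : ℕ) (X : Img) : Prop :=
  ∀ p : ℤ × ℤ, ¬(0 ≤ p.1 ∧ p.1 < (a : ℤ) ∧ 0 ≤ p.2 ∧ p.2 < (b : ℤ)) → X p = 0

/-- `conv` is multiplication in the additive monoid algebra. -/
lemma conv_eq_mul (X Y : Img) :
    conv X Y = (AddMonoidAlgebra.ofCoeff X * AddMonoidAlgebra.ofCoeff Y).coeff := by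
  rw [AddMonoidAlgebra.mul_def]
  simp only [AddMonoidAlgebra.coeff_ofCoeff, ← AddMonoidAlgebra.ofCoeff_single,
    ← AddMonoidAlgebra.ofCoeff_finsuppSum]
  rfl

lemma conv_rotate (A B C : Img) :
    conv (conv A B) C = conv (conv A C) B := by
  rw [conv_eq_mul A B, conv_eq_mul A C, conv_eq_mul, conv_eq_mul,
    AddMonoidAlgebra.ofCoeff_coeff, AddMonoidAlgebra.ofCoeff_coeff]
  rw [mul_right_comm]

/-- `conv Y K` is the `K`-weighted sum of translates of `Y`. -/
lemma conv_eq_sum_shift (Y K : Img) :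
    conv Y K = ∑ b ∈ K.support, K b • Y.mapDomain (· + b) := by
  unfold conv
  simp only [Finsupp.sum]
  rw [Finset.sum_comm]
  refine Finset.sum_congr rfl fun b _ => ?_
  rw [Finsupp.mapDomain, Finsupp.sum, Finset.smul_sum]
  refine Finset.sum_congr rfl fun a _ => ?_
  rw [Finsupp.smul_single, smul_eq_mul, mul_comm]

/-- Translation preserves the Frobenius norm. -/
lemma frob_mapDomain (Y : Img) (b : ℤ × ℤ) :
    frob (Y.mapDomain (· + b)) = frob Y := by
  unfold frob
  congr 1
  exact Finsupp.sum_mapDomain_index_inj (add_left_injective b)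

lemma frob_smul (c : ℝ) (X : Img) : frob (c • X) = |c| * frob X := by
  unfold frob
  rw [Finsupp.sum_smul_index (by simp)]
  simp_rw [mul_pow]
  rw [← Finsupp.mul_sum, Real.sqrt_mul (sq_nonneg c), Real.sqrt_sq_eq_abs]

/-- Embedding into a Euclidean space on a finite index set. -/
noncomputable def toE (T : Finset (ℤ × ℤ)) : Img →+ EuclideanSpace ℝ T where
  toFun X := WithLp.toLp 2 (fun p => X p.1)
  map_zero' := rfl
  map_add' A B := by rw [← WithLp.toLp_add]; congr 1

lemma frob_eq_norm (X : Img) (T : Finset (ℤ × ℤ)) (h : X.support ⊆ T) :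
    frob X = ‖toE T X‖ := by
  rw [EuclideanSpace.norm_eq]
  unfold frob
  congr 1
  rw [Finsupp.sum, Finset.sum_subset h (fun p _ hp => by
    rw [Finsupp.notMem_support_iff] at hp; simp [hp])]
  rw [← Finset.sum_coe_sort T fun p => X p ^ 2]
  refine Finset.sum_congr rfl fun p _ => ?_
  rw [Real.norm_eq_abs, sq_abs]
  rfl

/-- Triangle inequality for the Frobenius norm over finite sums. -/
lemma frob_sum_le {ι : Type*} (s : Finset ι) (F : ι → Img) :
    frob (∑ b ∈ s, F b) ≤ ∑ b ∈ s, frob (F b) := by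
  have hsum : (∑ b ∈ s, F b).support ⊆ s.biUnion (fun b => (F b).support) :=
    Finsupp.support_finset_sum
  calc frob (∑ b ∈ s, F b)
      = ‖toE (s.biUnion fun b => (F b).support) (∑ b ∈ s, F b)‖ := frob_eq_norm _ _ hsum
    _ = ‖∑ b ∈ s, toE (s.biUnion fun b => (F b).support) (F b)‖ := by rw [map_sum]
    _ ≤ ∑ b ∈ s, ‖toE (s.biUnion fun b => (F b).support) (F b)‖ := norm_sum_le _ _
    _ = ∑ b ∈ s, frob (F b) := Finset.sum_congr rfl fun b hb =>
        (frob_eq_norm _ _ (Finset.subset_biUnion_of_mem (fun b => (F b).support) hb)).symm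

/-- Blurring by a simplex kernel does not increase `‖I ⊗ X‖_F`. -/
theorem frob_conv_conv_le (I K X : Img) (hK : InSimplex K) :
    frob (conv (conv I K) X) ≤ frob (conv I X) := by
  obtain ⟨hpos, hone⟩ := hK
  rw [conv_rotate I K X, conv_eq_sum_shift]
  calc frob (∑ b ∈ K.support, K b • (conv I X).mapDomain (· + b))
      ≤ ∑ b ∈ K.support, frob (K b • (conv I X).mapDomain (· + b)) :=
        frob_sum_le _ _
    _ = ∑ b ∈ K.support, K b * frob (conv I X) := by
        refine Finset.sum_congr rfl fun b hb => ?_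
        rw [frob_smul, frob_mapDomain, abs_of_nonneg (hpos b)]
    _ = frob (conv I X) := by
        rw [← Finset.sum_mul, show ∑ b ∈ K.support, K b = 1 from hone, one_mul]
end

section
/- Fix positive integers m₁, m₂, s₁, s₂. Let L, I₀, K₀, N be finitely supported functions ℤ×ℤ → ℝ with K₀ in the simplex S and supported in the m₁×m₂ grid, and set B = I₀⊗K₀ + N. Assume ‖L⊗N‖_F ≤ ε for some ε ≥ 0, and suppose τ > 0 satisfies ‖(L⊗I₀)⊗X‖_F ≥ τ·‖X‖_F for every X supported in the (m₁+s₁−1)×(m₂+s₂−1) grid. Then for every function κ supported in the s₁×s₂ grid, one has ‖K₀⊗κ‖_F ≤ (‖(L⊗B)⊗κ‖_F + ε·‖κ‖_1) / τ. -/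
/-! ### Auxiliary lemmas -/

/-- Viewing an image as an element of the additive monoid algebra `ℝ[ℤ × ℤ]`. -/
noncomputable def toMA (X : Img) : AddMonoidAlgebra ℝ (ℤ × ℤ) := AddMonoidAlgebra.ofCoeff X

lemma toMA_conv (X Y : Img) : toMA (conv X Y) = toMA X * toMA Y := by
  rw [AddMonoidAlgebra.mul_def]; apply AddMonoidAlgebra.coeff_injective
  simp [toMA, conv, AddMonoidAlgebra.coeff_finsuppSum, AddMonoidAlgebra.coeff_single]

lemma toMA_add (X Y : Img) : toMA (X + Y) = toMA X + toMA Y := rfl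

lemma frob_eq_finset (X : Img) (s : Finset (ℤ × ℤ)) (h : X.support ⊆ s) :
    frob X = Real.sqrt (∑ p ∈ s, X p ^ 2) := by
  rw [frob, Finsupp.sum, Finset.sum_subset h]
  intro x _ hx
  rw [Finsupp.notMem_support_iff.1 hx]; simp

lemma sqrt_sum_add_sq_le {α : Type*} (s : Finset α) (f g : α → ℝ) :
    Real.sqrt (∑ p ∈ s, (f p + g p) ^ 2) ≤
      Real.sqrt (∑ p ∈ s, f p ^ 2) + Real.sqrt (∑ p ∈ s, g p ^ 2) := by
  have h := norm_add_le (E := EuclideanSpace ℝ s) (WithLp.toLp 2 fun i => f i) (WithLp.toLp 2 fun i => g i)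
  simp only [EuclideanSpace.norm_eq, PiLp.add_apply, Real.norm_eq_abs, sq_abs] at h
  rw [← Finset.sum_coe_sort s fun p => (f p + g p) ^ 2,
    ← Finset.sum_coe_sort s fun p => f p ^ 2,
    ← Finset.sum_coe_sort s fun p => g p ^ 2]
  exact h

lemma frob_add_le (X Y : Img) : frob (X + Y) ≤ frob X + frob Y := by
  rw [frob_eq_finset (X + Y) (X.support ∪ Y.support) Finsupp.support_add,
    frob_eq_finset X _ Finset.subset_union_left,
    frob_eq_finset Y _ Finset.subset_union_right]
  simp only [Finsupp.add_apply]
  exact sqrt_sum_add_sq_le _ _ _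

lemma frob_neg (X : Img) : frob (-X) = frob X := by
  rw [← neg_one_smul ℝ X, frob_smul]; simp

lemma frob_zero : frob 0 = 0 := by simp [frob]

lemma l1_zero : l1 0 = 0 := by simp [l1]

lemma l1_nonneg (X : Img) : 0 ≤ l1 X :=
  Finset.sum_nonneg fun _ _ => abs_nonneg _

lemma frob_mapDomain_s12 (f : ℤ × ℤ → ℤ × ℤ) (hf : Function.Injective f) (A : Img) :
    frob (Finsupp.mapDomain f A) = frob A := by
  rw [frob, frob, Finsupp.sum_mapDomain_index_inj hf]

lemma conv_single (A : Img) (b : ℤ × ℤ) (c : ℝ) :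
    conv A (Finsupp.single b c) = Finsupp.mapDomain (· + b) (c • A) := by
  have h1 : conv A (Finsupp.single b c) = A.sum fun a xa => Finsupp.single (a + b) (c * xa) := by
    unfold conv
    refine Finsupp.sum_congr fun a _ => ?_
    rw [Finsupp.sum_single_index (by simp), mul_comm]
  rw [h1, Finsupp.mapDomain_smul, Finsupp.mapDomain, Finsupp.smul_sum]
  refine Finsupp.sum_congr fun a _ => ?_
  rw [Finsupp.smul_single, smul_eq_mul]

lemma frob_conv_single (A : Img) (b : ℤ × ℤ) (c : ℝ) :
    frob (conv A (Finsupp.single b c)) = |c| * frob A := by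
  rw [conv_single, frob_mapDomain_s12 _ (fun x y h => by simpa using h), frob_smul]

lemma conv_zero (A : Img) : conv A 0 = 0 := by
  have : toMA (conv A 0) = toMA 0 := by
    rw [toMA_conv]; show toMA A * (0 : AddMonoidAlgebra ℝ (ℤ × ℤ)) = 0; rw [mul_zero]
  exact AddMonoidAlgebra.ofCoeff_injective this

lemma conv_add_right (A Y Z : Img) : conv A (Y + Z) = conv A Y + conv A Z := by
  have : toMA (conv A (Y + Z)) = toMA (conv A Y + conv A Z) := by
    rw [toMA_conv, toMA_add, toMA_add, toMA_conv, toMA_conv, mul_add]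
  exact AddMonoidAlgebra.ofCoeff_injective this

lemma l1_single_add (a : ℤ × ℤ) (b : ℝ) (f : Img) (ha : a ∉ f.support) (hb : b ≠ 0) :
    l1 (Finsupp.single a b + f) = |b| + l1 f := by
  have hd : Disjoint (Finsupp.single a b).support f.support := by
    rw [Finsupp.support_single_ne_zero a hb]
    simpa using ha
  rw [l1, Finsupp.sum, Finsupp.support_add_eq hd, Finsupp.support_single_ne_zero a hb,
    Finset.sum_union (Finset.disjoint_singleton_left.2 ha)]
  have hfa : f a = 0 := Finsupp.notMem_support_iff.1 ha
  congr 1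
  · simp [hfa]
  · rw [l1, Finsupp.sum]
    refine Finset.sum_congr rfl fun p hp => ?_
    have hpa : p ≠ a := by rintro rfl; exact ha hp
    simp [Finsupp.single_apply, hpa.symm]

/-- Young-type inequality: `‖A ⊗ κ‖_F ≤ ‖A‖_F ‖κ‖₁`. -/
lemma frob_conv_le (A κ : Img) : frob (conv A κ) ≤ frob A * l1 κ := by
  induction κ using Finsupp.induction with
  | zero => simp [conv_zero, frob_zero, l1_zero]
  | single_add a b f ha hb ih =>
    calc frob (conv A (Finsupp.single a b + f))
        = frob (conv A (Finsupp.single a b) + conv A f) := by rw [conv_add_right]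
      _ ≤ frob (conv A (Finsupp.single a b)) + frob (conv A f) := frob_add_le _ _
      _ = |b| * frob A + frob (conv A f) := by rw [frob_conv_single]
      _ ≤ |b| * frob A + frob A * l1 f := add_le_add_right ih _
      _ = frob A * l1 (Finsupp.single a b + f) := by rw [l1_single_add a b f ha hb]; ring

lemma suppIn_conv {a b c d : ℕ} {X Y : Img} (hX : SuppIn a b X) (hY : SuppIn c d Y) :
    SuppIn (a + c - 1) (b + d - 1) (conv X Y) := by
  intro p hp
  by_contra h
  have hmem : p ∈ (toMA (conv X Y)).coeff.support := Finsupp.mem_support_iff.2 h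
  rw [toMA_conv] at hmem
  have hsub := AddMonoidAlgebra.support_coeff_mul_subset (toMA X) (toMA Y) hmem
  rw [Finset.mem_add] at hsub
  obtain ⟨x, hx, y, hy, hxy⟩ := hsub
  have hx' : 0 ≤ x.1 ∧ x.1 < (a : ℤ) ∧ 0 ≤ x.2 ∧ x.2 < (b : ℤ) := by
    by_contra hc
    exact Finsupp.mem_support_iff.1 hx (hX x hc)
  have hy' : 0 ≤ y.1 ∧ y.1 < (c : ℤ) ∧ 0 ≤ y.2 ∧ y.2 < (d : ℤ) := by
    by_contra hc
    exact Finsupp.mem_support_iff.1 hy (hY y hc)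
  apply hp
  have h1 : p.1 = x.1 + y.1 := by rw [← hxy]; rfl
  have h2 : p.2 = x.2 + y.2 := by rw [← hxy]; rfl
  refine ⟨?_, ?_, ?_, ?_⟩ <;> omega

/-- Noisy necessary condition on the true kernel:
`‖K₀ ⊗ κ‖_F ≤ (‖L(B) ⊗ κ‖_F + ε ‖κ‖₁) / τ`. -/
theorem kernel_constraint_noisy (m₁ m₂ s₁ s₂ : ℕ)
    (hm₁ : 0 < m₁) (hm₂ : 0 < m₂) (hs₁ : 0 < s₁) (hs₂ : 0 < s₂)
    (L I₀ K₀ N B : Img) (hK₀ : InSimplex K₀) (hK₀supp : SuppIn m₁ m₂ K₀)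
    (hB : B = conv I₀ K₀ + N)
    (ε : ℝ) (hε : 0 ≤ ε) (hN : frob (conv L N) ≤ ε)
    (τ : ℝ) (hτ : 0 < τ)
    (hsharp : ∀ X : Img, SuppIn (m₁ + s₁ - 1) (m₂ + s₂ - 1) X →
      τ * frob X ≤ frob (conv (conv L I₀) X)) :
    ∀ κ : Img, SuppIn s₁ s₂ κ →
      frob (conv K₀ κ) ≤ (frob (conv (conv L B) κ) + ε * l1 κ) / τ := by
  intro κ hκ
  have h1 := hsharp _ (suppIn_conv hK₀supp hκ)
  have hB' : toMA B = toMA I₀ * toMA K₀ + toMA N := by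
    rw [hB, toMA_add, toMA_conv]
  have halg : conv (conv L I₀) (conv K₀ κ) = conv (conv L B) κ - conv (conv L N) κ := by
    have : toMA (conv (conv L I₀) (conv K₀ κ))
        = toMA (conv (conv L B) κ - conv (conv L N) κ) := by
      have hsub : toMA (conv (conv L B) κ - conv (conv L N) κ)
          = toMA (conv (conv L B) κ) - toMA (conv (conv L N) κ) := rfl
      rw [hsub]
      simp only [toMA_conv, hB']
      ring
    exact AddMonoidAlgebra.ofCoeff_injective this
  have h2 : frob (conv (conv L I₀) (conv K₀ κ))
      ≤ frob (conv (conv L B) κ) + frob (conv (conv L N) κ) := by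
    rw [halg, sub_eq_add_neg]
    exact (frob_add_le _ _).trans (by rw [frob_neg])
  have h3 : frob (conv (conv L N) κ) ≤ ε * l1 κ :=
    (frob_conv_le _ _).trans (mul_le_mul_of_nonneg_right hN (l1_nonneg κ))
  rw [le_div_iff₀ hτ]
  nlinarith [h1, h2, h3]
end
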